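/- arXiv:2310.04076 — 6 statements merged into one kernel-verified Lean document; each statement's English description precedes it below -/
import Mathlib

section
/- For any points a, b, c in a metric space, any real z ≥ 1, and any ε > 0, we have dist(a,b)^z ≤ (1+ε)^(z-1) · dist(a,c)^z + ((1+ε)/ε)^(z-1) · dist(b,c)^z. -/
open Finset in
lemma aux_rpow_two_mean (w₁ w₂ z₁ z₂ : ℝ) (hw₁ : 0 ≤ w₁) (hw₂ : 0 ≤ w₂)
    (hz₁ : 0 ≤ z₁) (hz₂ : 0 ≤ z₂) (hw : w₁ + w₂ = 1) {p : ℝ} (hp : 1 ≤ p) :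
    (w₁ * z₁ + w₂ * z₂) ^ p ≤ w₁ * z₁ ^ p + w₂ * z₂ ^ p := by
  have h := Real.rpow_arith_mean_le_arith_mean_rpow univ ![w₁, w₂] ![z₁, z₂]
    (by intro i _; fin_cases i <;> assumption)
    (by simp [Fin.sum_univ_succ, hw])
    (by intro i _; fin_cases i <;> assumption) hp
  simpa [Fin.sum_univ_succ] using h

theorem weak_triangle_inequality_for_powers {X : Type*} [MetricSpace X]
    (a b c : X) (z : ℝ) (hz : 1 ≤ z) (ε : ℝ) (hε : 0 < ε) :
    dist a b ^ z ≤ (1 + ε) ^ (z - 1) * dist a c ^ z +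
      ((1 + ε) / ε) ^ (z - 1) * dist b c ^ z := by
  set x := dist a c
  set y := dist b c
  have hx : 0 ≤ x := dist_nonneg
  have hy : 0 ≤ y := dist_nonneg
  have h1ε : (0:ℝ) < 1 + ε := by linarith
  have key : (x + y) ^ z ≤ (1 + ε) ^ (z - 1) * x ^ z + ((1 + ε) / ε) ^ (z - 1) * y ^ z := by
    have h := aux_rpow_two_mean (1/(1+ε)) (ε/(1+ε)) ((1+ε)*x) (((1+ε)/ε)*y)
      (by positivity) (by positivity) (by positivity) (by positivity)
      (by field_simp) hz
    have e1 : (1/(1+ε)) * ((1+ε)*x) + (ε/(1+ε)) * (((1+ε)/ε)*y) = x + y := by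
      field_simp
    rw [e1] at h
    refine h.trans_eq ?_
    have hne : (1+ε) ≠ 0 := h1ε.ne'
    rw [Real.mul_rpow h1ε.le hx, Real.mul_rpow (by positivity) hy,
      Real.rpow_sub h1ε, Real.rpow_sub (by positivity), Real.rpow_one, Real.rpow_one]
    field_simp
  calc dist a b ^ z ≤ (x + y) ^ z := by
        apply Real.rpow_le_rpow dist_nonneg (dist_triangle a c b |>.trans_eq (by rw [dist_comm c b]))
          (by linarith)
    _ ≤ _ := key
end

section
/- Let z ≥ 1 be an integer and 0 < ε ≤ 1. For real numbers 0 ≤ u ≤ (ε/(4z))·v or u ≥ (4z/ε)·v (with u,v ≥ 0), any real w with |u−v| ≤ w ≤ u+v satisfies |(u² + v²)^(z/2) − w^z| ≤ ε·(u^z + w^z). -/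
set_option maxHeartbeats 1000000

lemma key_scale (z : ℕ) (hz : 1 ≤ z) (ε : ℝ) (hε : 0 < ε) (hε1 : ε ≤ 1)
    (s t : ℝ) (ht : 0 ≤ t) (hts : t ≤ ε / (4 * z) * s) :
    (s + t) ^ z ≤ (1 + ε / 3) * s ^ z ∧ (1 - ε / 4) * s ^ z ≤ (s - t) ^ z := by
  have hz1 : (1:ℝ) ≤ (z : ℝ) := by exact_mod_cast hz
  have hzpos : (0:ℝ) < z := by linarith
  set δ : ℝ := ε / (4 * z) with hδdef
  have hδpos : 0 < δ := by positivity
  have hδz : δ * z = ε / 4 := by rw [hδdef]; field_simp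
  have hδ4 : δ ≤ 1/4 := by
    rw [hδdef, div_le_iff₀ (by positivity)]
    nlinarith
  have hs : 0 ≤ s := by nlinarith [le_trans ht hts]
  have hb : 1 - δ * (z:ℝ) ≤ (1 - δ) ^ z := by
    have := one_add_mul_le_pow (show (-2:ℝ) ≤ -δ by linarith) z
    have h : (1 : ℝ) + (z:ℝ) * (-δ) = 1 - δ * z := by ring
    rw [h] at this
    simpa [sub_eq_add_neg] using this
  have hb' : 1 - ε/4 ≤ (1 - δ) ^ z := by rw [← hδz]; exact hb
  have hspow : (0:ℝ) ≤ s ^ z := pow_nonneg hs z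
  constructor
  · -- upper
    have hmul : (1 - δ) ^ z * (1 + δ) ^ z ≤ 1 := by
      rw [← mul_pow]
      apply pow_le_one₀ (by nlinarith) (by nlinarith)
    have hP0 : (0:ℝ) ≤ (1 + δ) ^ z := by positivity
    have h1 : (1 - ε/4) * (1 + δ) ^ z ≤ 1 :=
      le_trans (mul_le_mul_of_nonneg_right hb' hP0) hmul
    have h2 : (1 + δ) ^ z ≤ 1 + ε/3 := by nlinarith [h1, sq_nonneg ε]
    calc (s + t) ^ z ≤ ((1 + δ) * s) ^ z := by
          apply pow_le_pow_left₀ (by linarith) (by nlinarith)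
      _ = (1 + δ) ^ z * s ^ z := mul_pow _ _ _
      _ ≤ (1 + ε/3) * s ^ z := mul_le_mul_of_nonneg_right h2 hspow
  · -- lower
    calc (1 - ε/4) * s ^ z ≤ (1 - δ) ^ z * s ^ z := mul_le_mul_of_nonneg_right hb' hspow
      _ = ((1 - δ) * s) ^ z := (mul_pow _ _ _).symm
      _ ≤ (s - t) ^ z := by
          apply pow_le_pow_left₀ (by nlinarith) (by nlinarith)

theorem pythagorean_proxy_scale_separated (z : ℕ) (hz : 1 ≤ z)
    (ε : ℝ) (hε : 0 < ε) (hε1 : ε ≤ 1)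
    (u v w : ℝ) (hu : 0 ≤ u) (hv : 0 ≤ v)
    (hcase : u ≤ ε / (4 * z) * v ∨ (4 * z) / ε * v ≤ u)
    (hw1 : |u - v| ≤ w) (hw2 : w ≤ u + v) :
    |(u ^ 2 + v ^ 2) ^ ((z : ℝ) / 2) - w ^ z| ≤ ε * (u ^ z + w ^ z) := by
  have hz1 : (1:ℝ) ≤ (z : ℝ) := by exact_mod_cast hz
  set A : ℝ := Real.sqrt (u ^ 2 + v ^ 2) with hAdef
  have hA : (u ^ 2 + v ^ 2) ^ ((z : ℝ) / 2) = A ^ z := by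
    rw [show ((z:ℝ)/2) = (1/2 : ℝ) * z by ring, Real.rpow_mul (by positivity),
      ← Real.sqrt_eq_rpow, Real.rpow_natCast]
  have hA0 : 0 ≤ A := Real.sqrt_nonneg _
  have hAub : A ≤ u + v := by
    have h := Real.sqrt_le_sqrt (show u^2+v^2 ≤ (u+v)^2 by nlinarith)
    rwa [Real.sqrt_sq (by positivity)] at h
  have hAu : u ≤ A := by
    have h := Real.sqrt_le_sqrt (show u^2 ≤ u^2+v^2 by nlinarith)
    rwa [Real.sqrt_sq hu] at h
  have hAv : v ≤ A := by
    have h := Real.sqrt_le_sqrt (show v^2 ≤ u^2+v^2 by nlinarith)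
    rwa [Real.sqrt_sq hv] at h
  have hw0 : 0 ≤ w := le_trans (abs_nonneg _) hw1
  have hεw : (0:ℝ) ≤ ε * w ^ z := by positivity
  have hεu : (0:ℝ) ≤ ε * u ^ z := by positivity
  rcases hcase with hC | hC
  · -- u small
    obtain ⟨up, lo⟩ := key_scale z hz ε hε hε1 v u hu hC
    have hcoef : ε / (4 * z) ≤ 1/4 := by
      rw [div_le_iff₀ (by positivity)]; nlinarith
    have huv : u ≤ v := le_trans hC (by nlinarith)
    have hwlo : v - u ≤ w := le_trans (by rw [abs_sub_comm]; exact le_abs_self _) hw1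
    have hAlb : v ^ z ≤ A ^ z := pow_le_pow_left₀ hv hAv z
    have hAup : A ^ z ≤ (v + u) ^ z := pow_le_pow_left₀ hA0 (by linarith) z
    have hwlo' : (v - u) ^ z ≤ w ^ z := pow_le_pow_left₀ (by linarith) hwlo z
    have hwup : w ^ z ≤ (v + u) ^ z := pow_le_pow_left₀ hw0 (by linarith) z
    have hvz : (0:ℝ) ≤ v ^ z := pow_nonneg hv z
    have hwv : (1 - ε/4) * v ^ z ≤ w ^ z := le_trans lo hwlo'
    have h1 : (1 + ε/3) * v ^ z ≤ (1 + ε) * ((1 - ε/4) * v ^ z) := by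
      nlinarith [hvz, mul_nonneg hε.le hvz, mul_nonneg (mul_nonneg hε.le (sub_nonneg.2 hε1)) hvz]
    have h2 : (1 + ε) * ((1 - ε/4) * v ^ z) ≤ (1 + ε) * w ^ z :=
      mul_le_mul_of_nonneg_left hwv (by linarith)
    have h3 : ε/3 * v ^ z ≤ ε * w ^ z := by
      nlinarith [hwv, mul_nonneg hε.le hvz, mul_nonneg (mul_nonneg hε.le (sub_nonneg.2 hε1)) hvz]
    rw [hA, abs_le]
    constructor
    · linarith [up, hAup, h1, h2, hεu]
    · linarith [hAlb, hwup, up, h3, hεu]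
  · -- v small
    have hzne : (z:ℝ) ≠ 0 := ne_of_gt (by linarith)
    have hv' : v ≤ ε / (4 * z) * u := by
      have h := mul_le_mul_of_nonneg_left hC (by positivity : (0:ℝ) ≤ ε / (4 * z))
      have heq : ε / (4 * z) * (4 * z / ε * v) = v := by field_simp
      rwa [heq] at h
    obtain ⟨up, lo⟩ := key_scale z hz ε hε hε1 u v hv hv'
    have hcoef : ε / (4 * z) ≤ 1/4 := by
      rw [div_le_iff₀ (by positivity)]; nlinarith
    have hvu : v ≤ u := le_trans hv' (by nlinarith)
    have hwlo : u - v ≤ w := le_trans (le_abs_self _) hw1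
    have hAlb : u ^ z ≤ A ^ z := pow_le_pow_left₀ hu hAu z
    have hAup : A ^ z ≤ (u + v) ^ z := pow_le_pow_left₀ hA0 (by linarith) z
    have hwlo' : (u - v) ^ z ≤ w ^ z := pow_le_pow_left₀ (by linarith) hwlo z
    have hwup : w ^ z ≤ (u + v) ^ z := pow_le_pow_left₀ hw0 (by linarith) z
    have huz : (0:ℝ) ≤ u ^ z := pow_nonneg hu z
    have h4 : 7 * ε / 12 * u ^ z ≤ ε * u ^ z := by nlinarith [mul_nonneg hε.le huz]
    have h5 : ε / 3 * u ^ z ≤ ε * u ^ z := by nlinarith [mul_nonneg hε.le huz]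
    rw [hA, abs_le]
    constructor
    · linarith [up, lo, hAup, hwlo', h4, hεw]
    · linarith [hAlb, hwup, up, h5, hεw]
end

section
/- Let p, m, c ∈ ℝ^d with m ≠ c, let q be the orthogonal projection of p onto the line through m and c, let z ≥ 1 be an integer and 0 < ε ≤ 1/2. If ‖m−q‖ ≤ (ε/(7z))·‖p−m‖, then |(‖p−m‖² + ‖m−c‖²)^(z/2) − ‖p−c‖^z| ≤ ε·‖p−c‖^z. -/
open RealInnerProductSpace

lemma aux_eps1 (ε : ℝ) (hε : 0 < ε) (hε2 : ε ≤ 1 / 2) :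
    (1 - ε) ^ 2 ≤ 1 - ε / 7 := by nlinarith

lemma aux_eps2 (ε : ℝ) (hε : 0 < ε) (hε2 : ε ≤ 1 / 2) :
    1 ≤ (1 + ε) ^ 2 * (1 - ε / 7) := by
  nlinarith [mul_nonneg (mul_nonneg hε.le hε.le) hε.le, sq_nonneg ε, sq_nonneg (1 - ε)]

set_option maxHeartbeats 1000000 in
theorem pythagorean_proxy_near_orthogonal {d : ℕ}
    (p m c q : EuclideanSpace ℝ (Fin d)) (hmc : m ≠ c)
    (hline : ∃ t : ℝ, q = m + t • (c - m))
    (hperp : ⟪p - q, c - m⟫ = 0)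
    (z : ℕ) (hz : 1 ≤ z) (ε : ℝ) (hε : 0 < ε) (hε2 : ε ≤ 1 / 2)
    (hnear : ‖m - q‖ ≤ ε / (7 * z) * ‖p - m‖) :
    |(‖p - m‖ ^ 2 + ‖m - c‖ ^ 2) ^ ((z : ℝ) / 2) - ‖p - c‖ ^ z|
      ≤ ε * ‖p - c‖ ^ z := by
  obtain ⟨t, ht⟩ := hline
  set A := ‖p - m‖ with hA
  set B := ‖m - c‖ with hB
  set C := ‖p - c‖ with hC
  set δ : ℝ := ε / (7 * z) with hδ
  have hzR : (1 : ℝ) ≤ (z : ℝ) := by exact_mod_cast hz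
  have hzpos : (0 : ℝ) < z := by linarith
  have hδpos : 0 < δ := by positivity
  have hδz : (z : ℝ) * δ = ε / 7 := by
    rw [hδ]
    field_simp
  have hδle : δ ≤ 1 / 14 := by
    have h7z : (7 : ℝ) ≤ 7 * z := by nlinarith
    have : δ ≤ ε / 7 := by
      rw [hδ, div_le_div_iff₀ (by positivity) (by norm_num)]
      nlinarith
    linarith
  have hA0 : 0 ≤ A := norm_nonneg _
  have hB0 : 0 ≤ B := norm_nonneg _
  have hC0 : 0 ≤ C := norm_nonneg _
  have hBpos : 0 < B := by
    rw [hB, norm_pos_iff, sub_ne_zero]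
    exact hmc
  -- q - m along the line
  have hqm : q - m = t • (c - m) := by rw [ht]; abel
  have hinner : ⟪p - m, c - m⟫ = t * B ^ 2 := by
    have hsplit : p - m = (p - q) + (q - m) := by abel
    rw [hsplit, inner_add_left, hperp, hqm, real_inner_smul_left,
      real_inner_self_eq_norm_sq, norm_sub_rev c m, ← hB]
    ring
  have hmq : ‖m - q‖ = |t| * B := by
    have : m - q = (-t) • (c - m) := by
      rw [ht]; module
    rw [this, norm_smul, norm_sub_rev c m]
    simp [hB]
  have htB : |t| * B ≤ δ * A := by rw [← hmq]; exact hnear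
  have htB' : |t * B| ≤ δ * A := by rw [abs_mul, abs_of_nonneg hB0]; exact htB
  have htB1 : t * B ≤ δ * A := (abs_le.mp htB').2
  have htB2 : -(δ * A) ≤ t * B := (abs_le.mp htB').1
  have hC2 : C ^ 2 = A ^ 2 + B ^ 2 - 2 * t * B ^ 2 := by
    have hsplit : p - c = (p - m) + (m - c) := by abel
    rw [hC, hsplit, norm_add_sq_real]
    have : (⟪p - m, m - c⟫ : ℝ) = -(t * B ^ 2) := by
      have : m - c = -(c - m) := by abel
      rw [this, inner_neg_right, hinner]
    rw [this]; ring
  set S : ℝ := A ^ 2 + B ^ 2 with hS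
  have hS0 : 0 ≤ S := by positivity
  have hSpos : 0 < S := by rw [hS]; nlinarith [sq_nonneg A]
  have hAB : 2 * (A * B) ≤ A ^ 2 + B ^ 2 := by nlinarith [sq_nonneg (A - B)]
  have m1 : t * B * B ≤ δ * A * B := mul_le_mul_of_nonneg_right htB1 hB0
  have m2 : -(δ * A) * B ≤ t * B * B := mul_le_mul_of_nonneg_right htB2 hB0
  have m3 : δ * (2 * (A * B)) ≤ δ * (A ^ 2 + B ^ 2) :=
    mul_le_mul_of_nonneg_left hAB hδpos.le
  have h1 : (1 - δ) * S ≤ C ^ 2 := by rw [hC2, hS]; nlinarith [m1, m3]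
  have h2 : C ^ 2 ≤ (1 + δ) * S := by rw [hC2, hS]; nlinarith [m2, m3]
  have hC2pos : 0 < C ^ 2 := by nlinarith [h1, hSpos, hδle]
  -- rewrite the rpow as a natural power of sqrt
  set x : ℝ := Real.sqrt S with hx
  have hx0 : 0 ≤ x := Real.sqrt_nonneg _
  have hx2 : x ^ 2 = S := Real.sq_sqrt hS0
  have hrw : S ^ ((z : ℝ) / 2) = x ^ z := by
    rw [hx, Real.sqrt_eq_rpow, ← Real.rpow_natCast (S ^ ((1:ℝ)/2)) z,
      ← Real.rpow_mul hS0]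
    ring_nf
  rw [hrw]
  -- key power facts
  have hδ1 : δ < 1 := by linarith
  have hQ : 1 - ε / 7 ≤ (1 - δ) ^ z := by
    have := one_add_mul_le_pow (a := -δ) (by linarith) z
    have h' : 1 + (z : ℝ) * (-δ) = 1 - ε / 7 := by rw [mul_neg, hδz]; ring
    calc (1 : ℝ) - ε / 7 = 1 + (z : ℝ) * (-δ) := h'.symm
      _ ≤ (1 + -δ) ^ z := this
      _ = (1 - δ) ^ z := by ring_nf
  have hQpos : (0:ℝ) < 1 - ε / 7 := by linarith
  have hPQ : (1 + δ) ^ z * (1 - δ) ^ z ≤ 1 := by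
    rw [← mul_pow]
    have h1' : (1 + δ) * (1 - δ) ≤ 1 := by nlinarith
    have h0' : 0 ≤ (1 + δ) * (1 - δ) := by nlinarith
    exact pow_le_one₀ h0' h1'
  have hPpos : (0:ℝ) < (1 + δ) ^ z := by positivity
  have hP : (1 + δ) ^ z * (1 - ε / 7) ≤ 1 := by
    calc (1 + δ) ^ z * (1 - ε / 7) ≤ (1 + δ) ^ z * (1 - δ) ^ z := by
          apply mul_le_mul_of_nonneg_left hQ (le_of_lt hPpos)
      _ ≤ 1 := hPQ
  have hT0 : (0:ℝ) ≤ S ^ z := by positivity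
  have hU0 : (0:ℝ) ≤ (C ^ 2) ^ z := by positivity
  have hUP : (C ^ 2) ^ z ≤ (1 + δ) ^ z * S ^ z := by
    rw [← mul_pow]
    exact pow_le_pow_left₀ (by positivity) h2 z
  have hTQ : (1 - δ) ^ z * S ^ z ≤ (C ^ 2) ^ z := by
    rw [← mul_pow]
    exact pow_le_pow_left₀ (mul_nonneg (by linarith) hS0) h1 z
  rw [abs_le]
  constructor
  · -- (1-ε) C^z ≤ x^z
    have key : (1 - ε) * C ^ z ≤ x ^ z := by
      have hb : 0 ≤ x ^ z := by positivity
      refine le_of_pow_le_pow_left₀ (two_ne_zero) hb ?_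
      have e1 : ((1 - ε) * C ^ z) ^ 2 = (1 - ε) ^ 2 * (C ^ 2) ^ z := by
        rw [mul_pow, ← pow_mul, ← pow_mul, Nat.mul_comm]
      have e2 : (x ^ z) ^ 2 = S ^ z := by
        rw [← pow_mul, Nat.mul_comm, pow_mul, hx2]
      rw [e1, e2]
      have hεsq : (1 - ε) ^ 2 ≤ 1 - ε / 7 := aux_eps1 ε hε hε2
      calc (1 - ε) ^ 2 * (C ^ 2) ^ z
          ≤ (1 - ε / 7) * ((1 + δ) ^ z * S ^ z) := by
            apply mul_le_mul hεsq hUP hU0 (le_of_lt hQpos)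
        _ = ((1 + δ) ^ z * (1 - ε / 7)) * S ^ z := by ring
        _ ≤ 1 * S ^ z := by apply mul_le_mul_of_nonneg_right hP hT0
        _ = S ^ z := by ring
    linarith [key]
  · -- x^z ≤ (1+ε) C^z
    have key : x ^ z ≤ (1 + ε) * C ^ z := by
      have hb : 0 ≤ (1 + ε) * C ^ z := by positivity
      refine le_of_pow_le_pow_left₀ (two_ne_zero) hb ?_
      have e1 : ((1 + ε) * C ^ z) ^ 2 = (1 + ε) ^ 2 * (C ^ 2) ^ z := by
        rw [mul_pow, ← pow_mul, ← pow_mul, Nat.mul_comm]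
      have e2 : (x ^ z) ^ 2 = S ^ z := by
        rw [← pow_mul, Nat.mul_comm, pow_mul, hx2]
      rw [e1, e2]
      have hεQ : 1 ≤ (1 + ε) ^ 2 * (1 - ε / 7) := aux_eps2 ε hε hε2
      calc S ^ z = 1 * S ^ z := by ring
        _ ≤ ((1 + ε) ^ 2 * (1 - ε / 7)) * S ^ z := by
            apply mul_le_mul_of_nonneg_right hεQ hT0
        _ = (1 + ε) ^ 2 * ((1 - ε / 7) * S ^ z) := by ring
        _ ≤ (1 + ε) ^ 2 * ((1 - δ) ^ z * S ^ z) := by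
            apply mul_le_mul_of_nonneg_left ?_ (by positivity)
            apply mul_le_mul_of_nonneg_right hQ hT0
        _ ≤ (1 + ε) ^ 2 * (C ^ 2) ^ z := by
            apply mul_le_mul_of_nonneg_left hTQ (by positivity)
    linarith [key]
end

section
/- Let p, m, c ∈ ℝ^d with m ≠ c, let q be the orthogonal projection of p onto the line through m and c, let 0 < ε ≤ 1/2 and z ≥ 1. If ‖m−q‖ ≤ (ε/(7z))·‖p−m‖, then ‖p−c‖² ≥ (1 − ε²/(49z²))·‖p−m‖². -/
open RealInnerProductSpace

theorem dist_lower_bound_near_orthogonal {d : ℕ}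
    (p m c q : EuclideanSpace ℝ (Fin d)) (hmc : m ≠ c)
    (hline : ∃ t : ℝ, q = m + t • (c - m))
    (hperp : ⟪p - q, c - m⟫ = 0)
    (z ε : ℝ) (hz : 1 ≤ z) (hε : 0 < ε) (hε2 : ε ≤ 1 / 2)
    (hnear : ‖m - q‖ ≤ ε / (7 * z) * ‖p - m‖) :
    (1 - ε ^ 2 / (49 * z ^ 2)) * ‖p - m‖ ^ 2 ≤ ‖p - c‖ ^ 2 := by
  obtain ⟨t, ht⟩ := hline
  have hm : m - q = (-t) • (c - m) := by rw [ht]; module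
  have hc : c - q = (1 - t) • (c - m) := by rw [ht]; module
  have h1 : ⟪p - q, m - q⟫ = 0 := by rw [hm, inner_smul_right, hperp]; ring
  have h2 : ⟪p - q, c - q⟫ = 0 := by rw [hc, inner_smul_right, hperp]; ring
  have e1 : ‖p - m‖ ^ 2 = ‖p - q‖ ^ 2 + ‖m - q‖ ^ 2 := by
    have h : p - m = (p - q) - (m - q) := by module
    rw [h, norm_sub_sq_real, h1]; ring
  have e2 : ‖p - c‖ ^ 2 = ‖p - q‖ ^ 2 + ‖c - q‖ ^ 2 := by
    have h : p - c = (p - q) - (c - q) := by module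
    rw [h, norm_sub_sq_real, h2]; ring
  have hz0 : (0 : ℝ) < z := lt_of_lt_of_le one_pos hz
  have hsq : ‖m - q‖ ^ 2 ≤ (ε / (7 * z)) ^ 2 * ‖p - m‖ ^ 2 := by
    nlinarith [norm_nonneg (m - q), hnear]
  have key : (ε / (7 * z)) ^ 2 = ε ^ 2 / (49 * z ^ 2) := by
    field_simp; ring
  nlinarith [norm_nonneg (c - q), sq_nonneg ‖c - q‖, hsq, e1, e2, key]
end

section
/- Let 𝒢 be a set of centers for points P in a metric space such that for every single candidate center c, cost(P,𝒢) − cost(P,𝒢 ∪ {c}) ≤ ε·OPT/k, where OPT is the optimal (k,z)-clustering cost. Then for every solution 𝒮 with k centers and every subset Q ⊆ P, cost(Q,𝒢) ≤ cost(Q,𝒮) + ε·OPT. -/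
theorem locally_stable_solution_bound {X : Type*} [MetricSpace X] [DecidableEq X]
    (z k : ℕ) (hz : 1 ≤ z) (hk : 1 ≤ k) (ε OPT : ℝ) (hε : 0 < ε)
    (P Q : Finset X) (hQ : Q ⊆ P)
    (G S : Finset X) (hG : G.Nonempty) (hS : S.Nonempty) (hScard : S.card = k)
    (hOPT : OPT = ⨅ T : {T : Finset X // T.Nonempty ∧ T.card = k},
      ∑ p ∈ P, (T : Finset X).inf' T.property.1 (fun s => dist p s ^ z))
    (hstable : ∀ c : X,
      (∑ p ∈ P, G.inf' hG (fun g => dist p g ^ z)) -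
        (∑ p ∈ P, (insert c G).inf' (Finset.insert_nonempty c G)
          (fun g => dist p g ^ z))
        ≤ ε * OPT / k) :
    (∑ p ∈ Q, G.inf' hG (fun g => dist p g ^ z))
      ≤ (∑ p ∈ Q, S.inf' hS (fun s => dist p s ^ z)) + ε * OPT := by
  classical
  set f : X → ℝ := fun p => G.inf' hG (fun g => dist p g ^ z) with hf
  have hσ : ∀ p : X, ∃ s ∈ S, S.inf' hS (fun s => dist p s ^ z) = dist p s ^ z :=
    fun p => S.exists_mem_eq_inf' hS _
  choose σ hσS hσval using hσ
  set g : X → X → ℝ := fun c p =>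
    (insert c G).inf' (Finset.insert_nonempty c G) (fun x => dist p x ^ z) with hg
  have hgf : ∀ c p, g c p ≤ f p := by
    intro c p
    exact Finset.le_inf' hG _ fun b hb =>
      Finset.inf'_le _ (Finset.mem_insert_of_mem hb)
  have key : ∀ p ∈ Q, f p - S.inf' hS (fun s => dist p s ^ z) ≤ f p - g (σ p) p := by
    intro p hp
    have h1 : g (σ p) p ≤ dist p (σ p) ^ z :=
      Finset.inf'_le _ (Finset.mem_insert_self _ _)
    rw [hσval p]
    linarith
  have main : ∑ p ∈ Q, (f p - S.inf' hS (fun s => dist p s ^ z)) ≤ ε * OPT := by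
    calc ∑ p ∈ Q, (f p - S.inf' hS (fun s => dist p s ^ z))
        ≤ ∑ p ∈ Q, (f p - g (σ p) p) := Finset.sum_le_sum key
      _ = ∑ s ∈ S, ∑ p ∈ Q.filter (fun p => σ p = s), (f p - g (σ p) p) :=
          (Finset.sum_fiberwise_of_maps_to (fun p _ => hσS p) _).symm
      _ ≤ ∑ s ∈ S, (ε * OPT / k) := by
          apply Finset.sum_le_sum
          intro s _
          have heq : ∑ p ∈ Q.filter (fun p => σ p = s), (f p - g (σ p) p)
              = ∑ p ∈ Q.filter (fun p => σ p = s), (f p - g s p) := by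
            apply Finset.sum_congr rfl
            intro p hp
            rw [(Finset.mem_filter.mp hp).2]
          rw [heq]
          have hsub : Q.filter (fun p => σ p = s) ⊆ P :=
            (Finset.filter_subset _ _).trans hQ
          calc ∑ p ∈ Q.filter (fun p => σ p = s), (f p - g s p)
              ≤ ∑ p ∈ P, (f p - g s p) := by
                apply Finset.sum_le_sum_of_subset_of_nonneg hsub
                intro p _ _
                have := hgf s p
                linarith
            _ = (∑ p ∈ P, f p) - ∑ p ∈ P, g s p := Finset.sum_sub_distrib _ _
            _ ≤ ε * OPT / k := hstable s
      _ = ε * OPT := by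
          rw [Finset.sum_const, hScard, nsmul_eq_mul]
          field_simp
  have hsplit : ∑ p ∈ Q, (f p - S.inf' hS (fun s => dist p s ^ z))
      = (∑ p ∈ Q, f p) - ∑ p ∈ Q, S.inf' hS (fun s => dist p s ^ z) :=
    Finset.sum_sub_distrib _ _
  rw [hsplit] at main
  linarith
end

section
/- Let R be a finite set in a metric space, 𝒮 a set of centers, z ≥ 1 an integer, 0 < ε ≤ 1/2. Suppose p ∈ R satisfies dist(p,q)^z ≤ (ε/z)^z · cost(p,𝒮) for all q ∈ R, where cost(p,𝒮) = min_{s∈𝒮} dist(p,s)^z. Then for every q ∈ R: (1−2ε)·cost(p,𝒮) ≤ cost(q,𝒮) ≤ (1+2ε)·cost(p,𝒮). -/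
theorem huge_range_costs_nearly_equal {X : Type*} [MetricSpace X]
    (z : ℕ) (hz : 1 ≤ z) (ε : ℝ) (hε : 0 < ε) (hε2 : ε ≤ 1 / 2)
    (R S : Finset X) (hS : S.Nonempty) (p : X) (hp : p ∈ R)
    (hhuge : ∀ q ∈ R,
      dist p q ^ z ≤ (ε / z) ^ z * S.inf' hS (fun s => dist p s ^ z)) :
    ∀ q ∈ R,
      (1 - 2 * ε) * (S.inf' hS (fun s => dist p s ^ z))
          ≤ (S.inf' hS (fun s => dist q s ^ z)) ∧
        (S.inf' hS (fun s => dist q s ^ z))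
          ≤ (1 + 2 * ε) * S.inf' hS (fun s => dist p s ^ z) := by
  intro q hq
  have hz0 : (0:ℝ) < z := by exact_mod_cast Nat.lt_of_lt_of_le Nat.zero_lt_one hz
  have hz1 : (1:ℝ) ≤ z := by exact_mod_cast hz
  obtain ⟨s, hsS, hs⟩ := S.exists_mem_eq_inf' hS (fun s => dist p s ^ z)
  obtain ⟨t, htS, ht⟩ := S.exists_mem_eq_inf' hS (fun s => dist q s ^ z)
  set a := dist p s with ha_def
  set b := dist q t with hb_def
  set d := dist p q with hd_def
  have ha : 0 ≤ a := dist_nonneg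
  have hb : 0 ≤ b := dist_nonneg
  have hd : 0 ≤ d := dist_nonneg
  have hez : 0 < ε / z := div_pos hε hz0
  have hez2 : ε / z ≤ 1/2 := le_trans (div_le_self hε.le hz1) hε2
  -- d ≤ (ε/z) * a
  have hdz : d ^ z ≤ ((ε / z) * a) ^ z := by
    have h := hhuge q hq
    rw [hs] at h
    calc d ^ z ≤ (ε/z)^z * a ^ z := h
      _ = ((ε/z) * a) ^ z := (mul_pow _ _ _).symm
  have hda : d ≤ (ε/z) * a :=
    (pow_le_pow_iff_left₀ hd (mul_nonneg hez.le ha) (by omega)).mp hdz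
  -- key inequality: (1 - ε) ≤ (1 - ε/z)^z  (Bernoulli)
  have hze : (z:ℝ) * (ε/z) = ε := by field_simp
  have key1 : (1 - ε) ≤ (1 - ε/z)^z := by
    have h := one_add_mul_le_pow (a := -(ε/z)) (by linarith) z
    rw [mul_neg, hze] at h
    rw [← sub_eq_add_neg, ← sub_eq_add_neg] at h
    exact h
  have hpos : (0:ℝ) < 1 - ε/z := by linarith
  have hmul : (1 + ε/z)^z * (1 - ε/z)^z ≤ 1 := by
    rw [← mul_pow]
    have h : (1 + ε/z) * (1 - ε/z) = 1 - (ε/z)^2 := by ring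
    rw [h]
    exact pow_le_one₀ (by nlinarith) (by nlinarith)
  -- key inequality: (1 + ε/z)^z ≤ 1 + 2ε
  have key2 : (1 + ε/z)^z ≤ 1 + 2*ε := by
    have hApos : (0:ℝ) < (1 + ε/z)^z := pow_pos (by linarith) z
    nlinarith [mul_le_mul_of_nonneg_left key1 hApos.le]
  -- lower bound on b
  have hba : (1 - ε/z) * a ≤ b := by
    by_contra hcon
    push_neg at hcon
    have h1 : b + d < a := by nlinarith
    have h2 : a ^ z ≤ (b + d) ^ z := by
      calc a ^ z = S.inf' hS (fun s => dist p s ^ z) := hs.symm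
        _ ≤ dist p t ^ z := Finset.inf'_le _ htS
        _ ≤ (b + d) ^ z := by
            refine pow_le_pow_left₀ dist_nonneg ?_ z
            calc dist p t ≤ dist p q + dist q t := dist_triangle p q t
              _ = b + d := by rw [add_comm]
    have h3 : (b + d) ^ z < a ^ z :=
      pow_lt_pow_left₀ h1 (by positivity) (by omega)
    linarith
  constructor
  · -- lower bound
    rw [hs, ht]
    have h1 : ((1 - ε/z) * a) ^ z ≤ b ^ z :=
      pow_le_pow_left₀ (by positivity) hba z
    have h2 : (1 - ε/z)^z * a ^ z ≤ b ^ z := by rwa [← mul_pow]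
    have h3 : 0 ≤ a ^ z := by positivity
    calc (1 - 2*ε) * a ^ z ≤ (1 - ε) * a ^ z := by nlinarith
      _ ≤ (1 - ε/z)^z * a ^ z := mul_le_mul_of_nonneg_right key1 h3
      _ ≤ b ^ z := h2
  · -- upper bound
    rw [hs, ht]
    have h1 : b ^ z ≤ dist q s ^ z := by rw [← ht]; exact Finset.inf'_le _ hsS
    have h2 : dist q s ≤ (1 + ε/z) * a := by
      calc dist q s ≤ dist q p + dist p s := dist_triangle q p s
        _ = d + a := by rw [dist_comm]
        _ ≤ (ε/z) * a + a := by linarith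
        _ = (1 + ε/z) * a := by ring
    have h3 : dist q s ^ z ≤ ((1 + ε/z) * a) ^ z :=
      pow_le_pow_left₀ dist_nonneg h2 z
    have h4 : ((1 + ε/z) * a) ^ z = (1 + ε/z)^z * a ^ z := mul_pow _ _ _
    have h5 : 0 ≤ a ^ z := by positivity
    calc b ^ z ≤ dist q s ^ z := h1
      _ ≤ (1 + ε/z)^z * a ^ z := by rw [← h4]; exact h3
      _ ≤ (1 + 2*ε) * a ^ z := mul_le_mul_of_nonneg_right key2 h5
end
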